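/- The square of the Bessel operator also factorizes as (∂_x² − ν(ν+1)/x²)² = (∂_x² + (2ν+3)/x · ∂_x + ν(ν+2)/x²)(∂_x² − (2ν+3)/x · ∂_x + (ν+1)(ν+3)/x²) for every ν ∈ ℂ. -/

import Mathlib

/-- The Bessel operator `∂_x² − ν(ν+1)/x²` acting on functions on `(0,∞)`. -/
noncomputable def besselOp (ν : ℂ) (f : ℝ → ℂ) (x : ℝ) : ℂ :=
  deriv (deriv f) x - (ν * (ν + 1) / (x : ℂ) ^ 2) * f x

/-- A second-order operator `∂_x² + (α/x) ∂_x + β/x²` with rational coefficients. -/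
noncomputable def ratOp (α β : ℂ) (f : ℝ → ℂ) (x : ℝ) : ℂ :=
  deriv (deriv f) x + (α / (x : ℂ)) * deriv f x + (β / (x : ℂ) ^ 2) * f x

/-- Derivative of `t ↦ c / t^(n+1) * g t`. -/
private lemma key (c : ℂ) (n : ℕ) {g : ℝ → ℂ} {g' : ℂ} {y : ℝ} (hy : (y : ℂ) ≠ 0)
    (hg : HasDerivAt g g' y) :
    HasDerivAt (fun t : ℝ => c / (t : ℂ) ^ (n + 1) * g t)
      (c / (y : ℂ) ^ (n + 1) * g' - ((n : ℂ) + 1) * c / (y : ℂ) ^ (n + 2) * g y) y := by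
  have h1 : HasDerivAt (fun t : ℝ => ((t : ℂ)) ^ (n + 1))
      ((((n : ℕ) + 1 : ℕ) : ℂ) * (y : ℂ) ^ n) y := by
    simpa using (hasDerivAt_pow (n + 1) ((y : ℝ) : ℂ)).comp_ofReal
  have h2 := ((hasDerivAt_const y c).div h1 (pow_ne_zero _ hy)).mul hg
  refine h2.congr_deriv ?_
  have hp1 : (y : ℂ) ^ (n + 1) ≠ 0 := pow_ne_zero _ hy
  have hp2 : (y : ℂ) ^ (n + 2) ≠ 0 := pow_ne_zero _ hy
  push_cast [Pi.div_apply]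
  field_simp
  ring

private lemma diffAt_of_contDiffOn {n : WithTop ℕ∞} {f : ℝ → ℂ}
    (hf : ContDiffOn ℝ n f (Set.Ioi 0)) (hn : 1 ≤ n) {y : ℝ} (hy : y ∈ Set.Ioi (0 : ℝ)) :
    HasDerivAt f (deriv f y) y :=
  (((hf.differentiableOn (zero_lt_one.trans_le hn).ne').differentiableAt (isOpen_Ioi.mem_nhds hy))).hasDerivAt

/-- First derivative of `ratOp a b f` at points of `(0, ∞)`. -/
private lemma ratOp_hasDerivAt (a b : ℂ) {f : ℝ → ℂ} (hf : ContDiffOn ℝ 4 f (Set.Ioi 0))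
    {y : ℝ} (hy : y ∈ Set.Ioi (0 : ℝ)) :
    HasDerivAt (fun t => ratOp a b f t)
      (deriv (deriv (deriv f)) y
        + (a / (y : ℂ) * deriv (deriv f) y - a / (y : ℂ) ^ 2 * deriv f y)
        + (b / (y : ℂ) ^ 2 * deriv f y - 2 * b / (y : ℂ) ^ 3 * f y)) y := by
  have hyc : (y : ℂ) ≠ 0 := by
    exact_mod_cast (show (0 : ℝ) < y from hy).ne'
  have hf1 : ContDiffOn ℝ 3 (deriv f) (Set.Ioi 0) :=
    hf.deriv_of_isOpen isOpen_Ioi (by norm_num)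
  have hf2 : ContDiffOn ℝ 2 (deriv (deriv f)) (Set.Ioi 0) :=
    hf1.deriv_of_isOpen isOpen_Ioi (by norm_num)
  have hd0 := diffAt_of_contDiffOn hf (by norm_num) hy
  have hd1 := diffAt_of_contDiffOn hf1 (by norm_num) hy
  have hd2 := diffAt_of_contDiffOn hf2 (by norm_num) hy
  have H := (hd2.add (key a 0 hyc hd1)).add (key b 1 hyc hd0)
  have hfun : (fun t => ratOp a b f t)
      = fun t : ℝ => deriv (deriv f) t + a / (t : ℂ) ^ (0 + 1) * deriv f t
          + b / (t : ℂ) ^ (1 + 1) * f t := by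
    funext t; norm_num [ratOp]
  rw [hfun]
  refine H.congr_deriv ?_
  push_cast
  ring

/-- Second derivative of `ratOp a b f` at points of `(0, ∞)`. -/
private lemma ratOp_deriv2 (a b : ℂ) {f : ℝ → ℂ} (hf : ContDiffOn ℝ 4 f (Set.Ioi 0))
    {x : ℝ} (hx : x ∈ Set.Ioi (0 : ℝ)) :
    deriv (deriv (fun t => ratOp a b f t)) x =
      deriv (deriv (deriv (deriv f))) x
        + (a / (x : ℂ) * deriv (deriv (deriv f)) x - a / (x : ℂ) ^ 2 * deriv (deriv f) x
            - (a / (x : ℂ) ^ 2 * deriv (deriv f) x - 2 * a / (x : ℂ) ^ 3 * deriv f x))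
        + (b / (x : ℂ) ^ 2 * deriv (deriv f) x - 2 * b / (x : ℂ) ^ 3 * deriv f x
            - (2 * b / (x : ℂ) ^ 3 * deriv f x - 6 * b / (x : ℂ) ^ 4 * f x)) := by
  have hxc : (x : ℂ) ≠ 0 := by
    exact_mod_cast (show (0 : ℝ) < x from hx).ne'
  have hf1 : ContDiffOn ℝ 3 (deriv f) (Set.Ioi 0) :=
    hf.deriv_of_isOpen isOpen_Ioi (by norm_num)
  have hf2 : ContDiffOn ℝ 2 (deriv (deriv f)) (Set.Ioi 0) :=
    hf1.deriv_of_isOpen isOpen_Ioi (by norm_num)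
  have hf3 : ContDiffOn ℝ 1 (deriv (deriv (deriv f))) (Set.Ioi 0) :=
    hf2.deriv_of_isOpen isOpen_Ioi (by norm_num)
  have hd0 := diffAt_of_contDiffOn hf (by norm_num) hx
  have hd1 := diffAt_of_contDiffOn hf1 (by norm_num) hx
  have hd2 := diffAt_of_contDiffOn hf2 (by norm_num) hx
  have hd3 := diffAt_of_contDiffOn hf3 (by norm_num) hx
  have e1 : deriv (fun t => ratOp a b f t) =ᶠ[nhds x]
      (fun y : ℝ => deriv (deriv (deriv f)) y
        + (a / (y : ℂ) * deriv (deriv f) y - a / (y : ℂ) ^ 2 * deriv f y)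
        + (b / (y : ℂ) ^ 2 * deriv f y - 2 * b / (y : ℂ) ^ 3 * f y)) :=
    Filter.eventually_of_mem (isOpen_Ioi.mem_nhds hx)
      (fun y hy => (ratOp_hasDerivAt a b hf hy).deriv)
  rw [e1.deriv_eq]
  have H := (hd3.add ((key a 0 hxc hd2).sub (key a 1 hxc hd1))).add
    ((key b 1 hxc hd1).sub (key (2 * b) 2 hxc hd0))
  have hfun : (fun y : ℝ => deriv (deriv (deriv f)) y
        + (a / (y : ℂ) * deriv (deriv f) y - a / (y : ℂ) ^ 2 * deriv f y)
        + (b / (y : ℂ) ^ 2 * deriv f y - 2 * b / (y : ℂ) ^ 3 * f y))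
      = (fun y : ℝ => deriv (deriv (deriv f)) y
        + (a / (y : ℂ) ^ (0 + 1) * deriv (deriv f) y - a / (y : ℂ) ^ (1 + 1) * deriv f y)
        + (b / (y : ℂ) ^ (1 + 1) * deriv f y - 2 * b / (y : ℂ) ^ (2 + 1) * f y)) := by
    funext t; norm_num
  rw [hfun]; refine H.deriv.trans ?_
  push_cast
  ring

set_option maxHeartbeats 1000000 in
/-- The square of the Bessel operator also factorizes as
`(∂² − ν(ν+1)/x²)² = (∂² + (2ν+3)/x ∂ + ν(ν+2)/x²)(∂² − (2ν+3)/x ∂ + (ν+1)(ν+3)/x²)`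
on 4-times differentiable functions on `(0,∞)`, for every `ν ∈ ℂ`. -/
theorem bessel_square_factorization' (ν : ℂ) :
    ∀ f : ℝ → ℂ, ContDiffOn ℝ 4 f (Set.Ioi 0) → ∀ x ∈ Set.Ioi (0 : ℝ),
      besselOp ν (fun t => besselOp ν f t) x =
        ratOp (2 * ν + 3) (ν * (ν + 2))
          (fun t => ratOp (-(2 * ν + 3)) ((ν + 1) * (ν + 3)) f t) x := by
  intro f hf x hx
  have hxc : (x : ℂ) ≠ 0 := by
    exact_mod_cast (show (0 : ℝ) < x from hx).ne'
  have hBf : (fun t => besselOp ν f t) = fun t => ratOp 0 (-(ν * (ν + 1))) f t := by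
    funext t; simp only [besselOp, ratOp]; ring
  rw [hBf]
  rw [show besselOp ν (fun t => ratOp 0 (-(ν * (ν + 1))) f t) x
        = deriv (deriv (fun t => ratOp 0 (-(ν * (ν + 1))) f t)) x
          - (ν * (ν + 1) / (x : ℂ) ^ 2) * ratOp 0 (-(ν * (ν + 1))) f x from rfl,
      show ratOp (2 * ν + 3) (ν * (ν + 2))
            (fun t => ratOp (-(2 * ν + 3)) ((ν + 1) * (ν + 3)) f t) x
        = deriv (deriv (fun t => ratOp (-(2 * ν + 3)) ((ν + 1) * (ν + 3)) f t)) x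
          + ((2 * ν + 3) / (x : ℂ))
              * deriv (fun t => ratOp (-(2 * ν + 3)) ((ν + 1) * (ν + 3)) f t) x
          + (ν * (ν + 2) / (x : ℂ) ^ 2) * ratOp (-(2 * ν + 3)) ((ν + 1) * (ν + 3)) f x
        from rfl,
      ratOp_deriv2 0 (-(ν * (ν + 1))) hf hx,
      ratOp_deriv2 (-(2 * ν + 3)) ((ν + 1) * (ν + 3)) hf hx,
      (ratOp_hasDerivAt (-(2 * ν + 3)) ((ν + 1) * (ν + 3)) hf hx).deriv]
  simp only [ratOp]
  simp only [div_eq_mul_inv, ← inv_pow]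
  ring
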